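/- arXiv:1609.05772 — 6 statements merged into one kernel-verified Lean document; each statement's English description precedes it below -/
import Mathlib

section
/- Let R, M be positive integers with M ≥ R, let H be an R×M real matrix of rank R each of whose columns sums to 1, and let A be an invertible R×R real matrix such that each column of the matrix A⁻¹·H also sums to 1. Then each column of A sums to 1, i.e. 1_Rᵀ·A = 1_Rᵀ where 1_R denotes the all-ones column vector of length R. -/
open Matrix

/-- If `H` is an `R × M` matrix of rank `R` (with `M ≥ R`) each of whose
columns sums to 1, and `A` is invertible with each column of `A⁻¹ * H` also summing to 1,
then each column of `A` sums to 1, i.e. `1ᵀ ⬝ A = 1ᵀ`. -/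
theorem stmt_1 (R M : ℕ) (hR : 0 < R) (hM : 0 < M) (hRM : R ≤ M)
    (H : Matrix (Fin R) (Fin M) ℝ) (hrank : H.rank = R)
    (hH : ∀ m : Fin M, ∑ r : Fin R, H r m = 1)
    (A : Matrix (Fin R) (Fin R) ℝ) (hA : IsUnit A)
    (hAH : ∀ m : Fin M, ∑ r : Fin R, (A⁻¹ * H) r m = 1) :
    (fun _ => (1 : ℝ)) ᵥ* A = fun _ => (1 : ℝ) := by
  have hli : LinearIndependent ℝ (fun i ↦ H i) := by
    rw [linearIndependent_iff_card_eq_finrank_span]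
    rw [H.rank_eq_finrank_span_row] at hrank
    simp only [Set.finrank, Fintype.card_fin]; exact hrank.symm
  have hinj : Function.Injective H.vecMul := Matrix.vecMul_injective_iff.mpr hli
  have key : ((fun _ => (1 : ℝ)) ᵥ* A⁻¹) ᵥ* H = (fun _ => (1 : ℝ)) ᵥ* H := by
    rw [vecMul_vecMul]
    funext m
    have h1 : ((fun _ => (1 : ℝ)) ᵥ* (A⁻¹ * H)) m = ∑ r : Fin R, (A⁻¹ * H) r m := by
      simp [vecMul, dotProduct]
    have h2 : ((fun _ => (1 : ℝ)) ᵥ* H) m = ∑ r : Fin R, H r m := by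
      simp [vecMul, dotProduct]
    rw [h1, h2, hAH m, hH m]
  have hv : (fun _ => (1 : ℝ)) ᵥ* A⁻¹ = fun _ => (1 : ℝ) := hinj key
  have hAinv : A⁻¹ * A = 1 := Matrix.nonsing_inv_mul A ((Matrix.isUnit_iff_isUnit_det A).mp hA)
  calc (fun _ => (1 : ℝ)) ᵥ* A = ((fun _ => (1 : ℝ)) ᵥ* A⁻¹) ᵥ* A := by rw [hv]
    _ = (fun _ => (1 : ℝ)) ᵥ* (A⁻¹ * A) := by rw [vecMul_vecMul]
    _ = fun _ => (1 : ℝ) := by rw [hAinv]; simp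
end

section
/- Let W be an N×R nonnegative real matrix and let H be an R×M row-stochastic real matrix, with R ≥ 2. Suppose there exist r₁ ≠ r₂ in {1,…,R} such that {j : H_{r₁ j} ≠ 0} ⊆ {j : H_{r₂ j} ≠ 0} (the support of row r₁ of H is contained in the support of row r₂ of H). Then there exists an invertible R×R real matrix A that is NOT a permutation matrix such that W·A is nonnegative, A⁻¹·H is nonnegative, and each row of A⁻¹·H sums to 1. -/
open Matrix

/-- A square real matrix is a permutation matrix if it is the identity matrix with its
columns rearranged, i.e. `A i j = 1` if `σ i = j` and `0` otherwise for some permutation `σ`. -/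
def IsPermutationMatrix {R : ℕ} (A : Matrix (Fin R) (Fin R) ℝ) : Prop :=
  ∃ σ : Equiv.Perm (Fin R), ∀ i j, A i j = if σ i = j then (1 : ℝ) else 0

/-- If `W` is nonnegative, `H` is row-stochastic with `R ≥ 2`, and the
support of row `r₁` of `H` is contained in the support of row `r₂` of `H` for some
`r₁ ≠ r₂`, then there is an invertible non-permutation matrix `A` with `W * A ≥ 0`,
`A⁻¹ * H ≥ 0` and `A⁻¹ * H` row-stochastic. -/
theorem stmt_3 (N R M : ℕ) (hR : 2 ≤ R)
    (W : Matrix (Fin N) (Fin R) ℝ) (hW : ∀ i r, 0 ≤ W i r)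
    (H : Matrix (Fin R) (Fin M) ℝ) (hHnn : ∀ r j, 0 ≤ H r j)
    (hHrow : ∀ r : Fin R, ∑ j : Fin M, H r j = 1)
    (r₁ r₂ : Fin R) (hne : r₁ ≠ r₂)
    (hsub : {j : Fin M | H r₁ j ≠ 0} ⊆ {j : Fin M | H r₂ j ≠ 0}) :
    ∃ A : Matrix (Fin R) (Fin R) ℝ, IsUnit A ∧ ¬ IsPermutationMatrix A ∧
      (∀ i r, 0 ≤ (W * A) i r) ∧
      (∀ r j, 0 ≤ (A⁻¹ * H) r j) ∧
      (∀ r : Fin R, ∑ j : Fin M, (A⁻¹ * H) r j = 1) := by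
  -- M is positive since rows of H sum to 1
  have hM : (Finset.univ : Finset (Fin M)).Nonempty := by
    by_contra h
    rw [Finset.not_nonempty_iff_eq_empty] at h
    have := hHrow r₁
    rw [h, Finset.sum_empty] at this
    norm_num at this
  -- choose the mixing coefficient t, made opaque
  obtain ⟨t, htpos, htlt, hkey⟩ :
      ∃ t : ℝ, 0 < t ∧ t < 1 ∧ ∀ j, t * H r₁ j ≤ H r₂ j := by
    set g : Fin M → ℝ := fun j => if H r₁ j = 0 then 1 else min 1 (H r₂ j / H r₁ j) with hg
    have hgpos : ∀ j, 0 < g j := by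
      intro j
      simp only [hg]
      split_ifs with h
      · norm_num
      · have h1 : 0 < H r₁ j := lt_of_le_of_ne (hHnn r₁ j) (Ne.symm h)
        have h2 : H r₂ j ≠ 0 := hsub h
        have h2' : 0 < H r₂ j := lt_of_le_of_ne (hHnn r₂ j) (Ne.symm h2)
        exact lt_min one_pos (div_pos h2' h1)
    have hgle : ∀ j, g j ≤ 1 := by
      intro j
      simp only [hg]
      split_ifs with h
      · exact le_refl 1
      · exact min_le_left _ _
    set c : ℝ := Finset.univ.inf' hM g with hc
    have hcpos : 0 < c := (Finset.lt_inf'_iff hM).2 fun j _ => hgpos j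
    have hcle : c ≤ 1 := by
      obtain ⟨j, _⟩ := hM
      exact le_trans (Finset.inf'_le g (Finset.mem_univ j)) (hgle j)
    refine ⟨c / 2, by positivity, by linarith, ?_⟩
    intro j
    rcases eq_or_ne (H r₁ j) 0 with h | h
    · rw [h, mul_zero]; exact hHnn r₂ j
    · have h1 : 0 < H r₁ j := lt_of_le_of_ne (hHnn r₁ j) (Ne.symm h)
      have htg : c / 2 ≤ g j := by
        have := Finset.inf'_le g (Finset.mem_univ j)
        rw [← hc] at this
        linarith
      have hgj : g j = min 1 (H r₂ j / H r₁ j) := by simp [hg, h]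
      have htr : c / 2 ≤ H r₂ j / H r₁ j := le_trans htg (hgj ▸ min_le_right _ _)
      calc c / 2 * H r₁ j ≤ (H r₂ j / H r₁ j) * H r₁ j :=
            mul_le_mul_of_nonneg_right htr (le_of_lt h1)
        _ = H r₂ j := by field_simp
  have ht1 : (1 : ℝ) - t ≠ 0 := by linarith
  have ht1pos : (0 : ℝ) < 1 - t := by linarith
  -- define A and its inverse B
  set s : ℝ := -t / (1 - t) with hs
  set E : Matrix (Fin R) (Fin R) ℝ :=
    single r₂ r₁ 1 - single r₂ r₂ 1 with hE
  set A : Matrix (Fin R) (Fin R) ℝ := 1 + t • E with hA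
  set B : Matrix (Fin R) (Fin R) ℝ := 1 + s • E with hB
  have hEE : E * E = -E := by
    rw [hE, sub_mul, mul_sub, mul_sub]
    rw [Matrix.single_mul_single_of_ne (h := hne), Matrix.single_mul_single_of_ne (h := hne),
      Matrix.single_mul_single_same, Matrix.single_mul_single_same]
    simp
  have expand : ∀ a b : ℝ, (1 + a • E) * (1 + b • E) = 1 + (a + b - a * b) • E := by
    intro a b
    have h1 : (a • E) * (b • E) = (a * b) • (E * E) := by
      rw [Matrix.smul_mul, Matrix.mul_smul, smul_smul]
    rw [add_mul, mul_add, mul_add, h1, hEE, smul_neg, sub_smul, add_smul]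
    simp only [one_mul, mul_one]
    abel
  have hts : t + s - t * s = 0 := by
    rw [hs]; field_simp; ring
  have hst : s + t - s * t = 0 := by rw [mul_comm]; linarith
  have hAB : A * B = 1 := by
    rw [hA, hB, expand, hts, zero_smul, add_zero]
  have hBA : B * A = 1 := by
    rw [hA, hB, expand, hst, zero_smul, add_zero]
  have hUnit : IsUnit A := ⟨⟨A, B, hAB, hBA⟩, rfl⟩
  have hAinv : A⁻¹ = B := Matrix.inv_eq_right_inv hAB
  have hne' : r₂ ≠ r₁ := Ne.symm hne
  -- explicit entries of 1 + x • E
  have hent : ∀ (x : ℝ) (i j : Fin R), (1 + x • E) i j = if i = r₂ then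
      (if j = r₁ then x else if j = r₂ then 1 - x else 0) else (if i = j then 1 else 0) := by
    intro x i j
    rw [hE]
    simp only [Matrix.add_apply, Matrix.smul_apply, Matrix.sub_apply, Matrix.one_apply,
      Matrix.single, Matrix.of_apply]
    by_cases h1 : i = r₂
    · rw [h1]
      by_cases h2 : j = r₁
      · rw [h2]
        simp [hne']
      · by_cases h3 : j = r₂
        · rw [h3]
          simp [hne, hne']
          ring
        · have h2' : r₁ ≠ j := fun h => h2 h.symm
          have h3' : r₂ ≠ j := fun h => h3 h.symm
          simp [h2, h3, h2', h3']
    · have h1' : r₂ ≠ i := fun h => h1 h.symm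
      simp [h1', h1]
  have hAe : ∀ i j, A i j = if i = r₂ then
      (if j = r₁ then t else if j = r₂ then 1 - t else 0) else (if i = j then 1 else 0) := by
    intro i j; rw [hA]; exact hent t i j
  have hBe : ∀ i j, B i j = if i = r₂ then
      (if j = r₁ then s else if j = r₂ then 1 - s else 0) else (if i = j then 1 else 0) := by
    intro i j; rw [hB]; exact hent s i j
  have h1s : 1 - s = 1 / (1 - t) := by rw [hs]; field_simp; ring
  -- B * H entries
  have hBH : ∀ r j, (B * H) r j =
      if r = r₂ then (H r₂ j - t * H r₁ j) / (1 - t) else H r j := by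
    intro r j
    rw [Matrix.mul_apply]
    by_cases hr : r = r₂
    · rw [hr, if_pos rfl]
      have heq : ∀ k, B r₂ k * H k j =
          (if k = r₁ then s * H r₁ j else 0) + (if k = r₂ then (1 - s) * H r₂ j else 0) := by
        intro k
        rw [hBe, if_pos rfl]
        by_cases h1 : k = r₁
        · rw [h1]; simp [hne]
        · by_cases h2 : k = r₂
          · rw [h2]; simp [hne']
          · simp [h1, h2]
      rw [Finset.sum_congr rfl (fun k _ => heq k), Finset.sum_add_distrib,
        Finset.sum_ite_eq' Finset.univ r₁, Finset.sum_ite_eq' Finset.univ r₂]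
      simp only [Finset.mem_univ, if_true]
      rw [h1s, hs]
      field_simp
      ring
    · rw [if_neg hr]
      have heq : ∀ k, B r k * H k j = if r = k then H k j else 0 := by
        intro k
        rw [hBe, if_neg hr]
        by_cases h : r = k
        · rw [h]; simp
        · simp [h]
      rw [Finset.sum_congr rfl (fun k _ => heq k), Finset.sum_ite_eq Finset.univ r]
      simp
  have hBH2 : ∀ j, (B * H) r₂ j = (H r₂ j - t * H r₁ j) / (1 - t) := by
    intro j; rw [hBH]; exact if_pos rfl
  have hBH1 : ∀ r, r ≠ r₂ → ∀ j, (B * H) r j = H r j := by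
    intro r hr j; rw [hBH]; exact if_neg hr
  refine ⟨A, hUnit, ?_, ?_, ?_, ?_⟩
  · -- not a permutation matrix
    rintro ⟨σ, hσ⟩
    have h := hσ r₂ r₁
    rw [hAe, if_pos rfl, if_pos rfl] at h
    split_ifs at h
    · linarith
    · linarith
  · -- W * A nonneg
    intro i r
    rw [Matrix.mul_apply]
    apply Finset.sum_nonneg
    intro k _
    apply mul_nonneg (hW i k)
    rw [hAe]
    split_ifs <;> linarith
  · -- A⁻¹ * H nonneg
    intro r j
    rw [hAinv]
    by_cases hr : r = r₂
    · rw [hr, hBH2]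
      apply div_nonneg _ (le_of_lt ht1pos)
      linarith [hkey j]
    · rw [hBH1 r hr]
      exact hHnn r j
  · -- row sums
    intro r
    rw [hAinv]
    by_cases hr : r = r₂
    · rw [hr]
      rw [Finset.sum_congr rfl fun j _ => hBH2 j]
      rw [← Finset.sum_div, Finset.sum_sub_distrib, ← Finset.mul_sum, hHrow, hHrow]
      field_simp
    · rw [Finset.sum_congr rfl fun j _ => hBH1 r hr j]
      exact hHrow r
end

section
/- Let W be an N×R nonnegative real matrix and let H be an R×M row-stochastic real matrix, with R ≥ 2. Suppose there exist r₁ ≠ r₂ in {1,…,R} such that {i : W_{i r₁} ≠ 0} ⊆ {i : W_{i r₂} ≠ 0} (the support of column r₁ of W is contained in the support of column r₂ of W). Then there exists an invertible R×R real matrix A that is NOT a permutation matrix such that W·A is nonnegative, A⁻¹·H is nonnegative, and each row of A⁻¹·H sums to 1. -/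
open Matrix

/-- If `W` is nonnegative, `H` is row-stochastic with `R ≥ 2`, and the
support of column `r₁` of `W` is contained in the support of column `r₂` of `W` for some
`r₁ ≠ r₂`, then there is an invertible non-permutation matrix `A` with `W * A ≥ 0`,
`A⁻¹ * H ≥ 0` and `A⁻¹ * H` row-stochastic. -/
theorem stmt_4 (N R M : ℕ) (hR : 2 ≤ R)
    (W : Matrix (Fin N) (Fin R) ℝ) (hW : ∀ i r, 0 ≤ W i r)
    (H : Matrix (Fin R) (Fin M) ℝ) (hHnn : ∀ r j, 0 ≤ H r j)
    (hHrow : ∀ r : Fin R, ∑ j : Fin M, H r j = 1)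
    (r₁ r₂ : Fin R) (hne : r₁ ≠ r₂)
    (hsub : {i : Fin N | W i r₁ ≠ 0} ⊆ {i : Fin N | W i r₂ ≠ 0}) :
    ∃ A : Matrix (Fin R) (Fin R) ℝ, IsUnit A ∧ ¬ IsPermutationMatrix A ∧
      (∀ i r, 0 ≤ (W * A) i r) ∧
      (∀ r j, 0 ≤ (A⁻¹ * H) r j) ∧
      (∀ r : Fin R, ∑ j : Fin M, (A⁻¹ * H) r j = 1) := by
  -- choose ε
  set f : Fin N → ℝ := fun i => if W i r₁ = 0 then 1 else W i r₂ / W i r₁ with hf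
  set s : Finset ℝ := insert (1 : ℝ) (Finset.univ.image f) with hs
  have hsne : s.Nonempty := ⟨1, Finset.mem_insert_self _ _⟩
  set ε : ℝ := s.min' hsne with hε
  have hεpos : 0 < ε := by
    apply (Finset.lt_min'_iff s hsne).2
    intro y hy
    rcases Finset.mem_insert.1 hy with h | h
    · simp [h]
    · obtain ⟨i, _, rfl⟩ := Finset.mem_image.1 h
      by_cases h0 : W i r₁ = 0
      · simp [hf, h0]
      · have h1 : 0 < W i r₁ := lt_of_le_of_ne (hW i r₁) (Ne.symm h0)
        have h2 : W i r₂ ≠ 0 := hsub h0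
        have h3 : 0 < W i r₂ := lt_of_le_of_ne (hW i r₂) (Ne.symm h2)
        simp [hf, h0]
        positivity
  have hεW : ∀ i, ε * W i r₁ ≤ W i r₂ := by
    intro i
    by_cases h0 : W i r₁ = 0
    · simp [h0, hW i r₂]
    · have h1 : 0 < W i r₁ := lt_of_le_of_ne (hW i r₁) (Ne.symm h0)
      have hmem : f i ∈ s := Finset.mem_insert_of_mem (Finset.mem_image_of_mem f (Finset.mem_univ i))
      have hle : ε ≤ f i := Finset.min'_le s _ hmem
      rw [hf] at hle
      simp only [h0, if_false] at hle
      calc ε * W i r₁ ≤ (W i r₂ / W i r₁) * W i r₁ := by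
            exact mul_le_mul_of_nonneg_right hle h1.le
        _ = W i r₂ := by field_simp
  have h1ε : (0:ℝ) < 1 + ε := by linarith
  set δ : ℝ := ε / (1 + ε) with hδ
  have hδ0 : 0 ≤ δ := by positivity
  have hδ1 : δ < 1 := by rw [hδ, div_lt_one h1ε]; linarith
  set B : Matrix (Fin R) (Fin R) ℝ :=
    single r₁ r₁ 1 - single r₁ r₂ 1 with hB
  have hBB : B * B = B := by
    rw [hB, sub_mul, mul_sub, mul_sub,
      Matrix.single_mul_single_same, Matrix.single_mul_single_same,
      Matrix.single_mul_single_of_ne (h := hne.symm),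
      Matrix.single_mul_single_of_ne (h := hne.symm)]
    simp
  have hBapp : ∀ i j, B i j =
      if i = r₁ then (if j = r₁ then 1 else if j = r₂ then -1 else 0) else 0 := by
    intro i j
    rw [hB]
    simp only [Matrix.sub_apply, Matrix.single]
    by_cases h1 : i = r₁ <;> by_cases h2 : j = r₁ <;> by_cases h3 : j = r₂ <;>
      simp_all [Matrix.of_apply, eq_comm]
  set A : Matrix (Fin R) (Fin R) ℝ := 1 + ε • B with hA
  set C : Matrix (Fin R) (Fin R) ℝ := 1 - δ • B with hC
  have hkey : ε - δ - ε * δ = 0 := by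
    rw [hδ]; field_simp; ring
  have hAC : A * C = 1 := by
    rw [hA, hC]
    rw [add_mul, one_mul, mul_sub, mul_one, smul_mul_assoc, mul_smul_comm, hBB, smul_smul]
    have hk2 : ε • B = δ • B + (ε * δ) • B := by
      rw [← add_smul]
      congr 1
      linarith [hkey]
    rw [hk2]
    abel
  have hCA : C * A = 1 := mul_eq_one_comm.mp hAC
  have hAinv : A⁻¹ = C := Matrix.inv_eq_right_inv hAC
  refine ⟨A, ⟨⟨A, C, hAC, hCA⟩, rfl⟩, ?_, ?_, ?_, ?_⟩
  · rintro ⟨σ, hσ⟩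
    have h11 : A r₁ r₁ = 1 + ε := by
      rw [hA]; simp [Matrix.add_apply, hBapp]
    have := hσ r₁ r₁
    rw [h11] at this
    split_ifs at this <;> linarith
  · intro i r
    have : (W * A) i r = W i r + ε * (W i r₁ * B r₁ r) := by
      rw [hA, Matrix.mul_add, Matrix.mul_one, Matrix.mul_smul, Matrix.add_apply,
        Matrix.smul_apply, Matrix.mul_apply, smul_eq_mul]
      congr 1
      congr 1
      rw [Finset.sum_eq_single r₁]
      · intro b _ hb
        rw [hBapp]; simp [hb]
      · simp
    rw [this]
    by_cases h1 : r = r₁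
    · have hb : B r₁ r = 1 := by rw [hBapp]; simp [h1]
      rw [hb]
      nlinarith [hW i r, hW i r₁, hεpos.le, mul_nonneg hεpos.le (hW i r₁)]
    · by_cases h2 : r = r₂
      · have hb : B r₁ r = -1 := by rw [hBapp]; simp [h2, Ne.symm hne]
        rw [hb, h2]
        nlinarith [hεW i]
      · have hb : B r₁ r = 0 := by rw [hBapp]; simp [h1, h2]
        simp [hb, hW i r]
  · intro r j
    have : (A⁻¹ * H) r j = H r j - δ * (B r r₁ * H r₁ j + B r r₂ * H r₂ j) := by
      rw [hAinv, hC, Matrix.sub_mul, Matrix.one_mul, Matrix.smul_mul, Matrix.sub_apply,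
        Matrix.smul_apply, Matrix.mul_apply, smul_eq_mul]
      congr 2
      rw [Finset.sum_eq_add_of_mem r₁ r₂ (Finset.mem_univ _) (Finset.mem_univ _) hne]
      intro c _ hc
      rw [hBapp]
      rcases hc with ⟨hc1, hc2⟩
      by_cases h : r = r₁ <;> simp [h, Ne.symm hc1, Ne.symm hc2, hc1, hc2]
    rw [this]
    by_cases h : r = r₁
    · have hb1 : B r r₁ = 1 := by rw [hBapp]; simp [h]
      have hb2 : B r r₂ = -1 := by rw [hBapp]; simp [h, Ne.symm hne, hne]
      rw [hb1, hb2, h]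
      nlinarith [mul_nonneg hδ0 (hHnn r₂ j),
        mul_nonneg (by linarith : (0:ℝ) ≤ 1 - δ) (hHnn r₁ j)]
    · have hb1 : B r r₁ = 0 := by rw [hBapp]; simp [h]
      have hb2 : B r r₂ = 0 := by rw [hBapp]; simp [h]
      simp [hb1, hb2, hHnn r j]
  · intro r
    have key : ∀ j, (A⁻¹ * H) r j = H r j - δ * (B r r₁ * H r₁ j + B r r₂ * H r₂ j) := by
      intro j
      rw [hAinv, hC, Matrix.sub_mul, Matrix.one_mul, Matrix.smul_mul, Matrix.sub_apply,
        Matrix.smul_apply, Matrix.mul_apply, smul_eq_mul]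
      congr 2
      rw [Finset.sum_eq_add_of_mem r₁ r₂ (Finset.mem_univ _) (Finset.mem_univ _) hne]
      intro c _ hc
      rw [hBapp]
      rcases hc with ⟨hc1, hc2⟩
      by_cases h : r = r₁ <;> simp [h, Ne.symm hc1, Ne.symm hc2, hc1, hc2]
    simp only [key]
    rw [Finset.sum_sub_distrib, hHrow r, ← Finset.mul_sum, Finset.sum_add_distrib,
      ← Finset.mul_sum, ← Finset.mul_sum, hHrow r₁, hHrow r₂]
    by_cases h : r = r₁
    · have hb1 : B r r₁ = 1 := by rw [hBapp]; simp [h]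
      have hb2 : B r r₂ = -1 := by rw [hBapp]; simp [h, Ne.symm hne, hne]
      rw [hb1, hb2]; ring
    · have hb1 : B r r₁ = 0 := by rw [hBapp]; simp [h]
      have hb2 : B r r₂ = 0 := by rw [hBapp]; simp [h]
      rw [hb1, hb2]; ring
end

section
/- Let N, M be positive integers, let W be an N×2 nonnegative real matrix with W_{i1} > 0 for every i ∈ {1,…,N}, and let H be a 2×M row-stochastic real matrix with H_{2j} > 0 for every j ∈ {1,…,M}. Define a_L = min_{i ∈ {1,…,N}} W_{i2}/W_{i1} and a_H = min_{j ∈ {1,…,M}} H_{1j}/H_{2j}. Then for a real number a, the four inequalities (i) W_{i1}(1−a) ≥ 0, (ii) W_{i1}·a + W_{i2} ≥ 0, (iii) H_{1j} − a·H_{2j} ≥ 0, and (iv) H_{2j} ≥ 0 hold for all i ∈ {1,…,N} and all j ∈ {1,…,M} if and only if −a_L ≤ a ≤ a_H. -/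
open Matrix Finset

/-- Two-factor natural bounds along the `a`-axis: with `b = 0`, the
non-negativity constraints of the stochastic matrix factorization hold for all `i, j`
iff `-a_L ≤ a ≤ a_H`, where `a_L = min_i W i 1 / W i 0` and `a_H = min_j H 0 j / H 1 j`. -/
theorem stmt_5 (N M : ℕ) [NeZero N] [NeZero M]
    (W : Matrix (Fin N) (Fin 2) ℝ) (hW : ∀ i r, 0 ≤ W i r)
    (hWpos : ∀ i, 0 < W i 0)
    (H : Matrix (Fin 2) (Fin M) ℝ) (hHnn : ∀ r j, 0 ≤ H r j)
    (hHrow : ∀ r : Fin 2, ∑ j : Fin M, H r j = 1)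
    (hHpos : ∀ j, 0 < H 1 j)
    (a : ℝ) :
    (∀ (i : Fin N) (j : Fin M),
        0 ≤ W i 0 * (1 - a) ∧
        0 ≤ W i 0 * a + W i 1 ∧
        0 ≤ H 0 j - a * H 1 j ∧
        0 ≤ H 1 j) ↔
      (-(Finset.univ.inf' Finset.univ_nonempty fun i : Fin N => W i 1 / W i 0) ≤ a ∧
        a ≤ Finset.univ.inf' Finset.univ_nonempty fun j : Fin M => H 0 j / H 1 j) := by
  constructor
  · intro h
    constructor
    · rw [neg_le]
      apply Finset.le_inf'
      intro i _
      have h2 := (h i (Classical.arbitrary (Fin M))).2.1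
      rw [le_div_iff₀ (hWpos i), neg_mul, neg_le, mul_comm]
      linarith
    · apply Finset.le_inf'
      intro j _
      have h3 := (h (Classical.arbitrary (Fin N)) j).2.2.1
      rw [le_div_iff₀ (hHpos j)]
      linarith
  · rintro ⟨h1, h2⟩
    -- a ≤ 1: there is some j with H 0 j ≤ H 1 j
    have hex : ∃ j : Fin M, H 0 j ≤ H 1 j := by
      by_contra hc
      push_neg at hc
      have : (∑ j : Fin M, H 1 j) < ∑ j : Fin M, H 0 j :=
        Finset.sum_lt_sum_of_nonempty Finset.univ_nonempty (fun j _ => hc j)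
      rw [hHrow 0, hHrow 1] at this
      exact lt_irrefl _ this
    obtain ⟨j0, hj0⟩ := hex
    have ha1 : a ≤ 1 := by
      calc a ≤ _ := h2
        _ ≤ H 0 j0 / H 1 j0 := Finset.inf'_le _ (Finset.mem_univ j0)
        _ ≤ 1 := by rw [div_le_one (hHpos j0)]; exact hj0
    intro i j
    refine ⟨?_, ?_, ?_, (hHpos j).le⟩
    · exact mul_nonneg (hWpos i).le (by linarith)
    · have : -(W i 1 / W i 0) ≤ a := le_trans (neg_le_neg
        (Finset.inf'_le _ (Finset.mem_univ i))) h1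
      rw [neg_le, le_div_iff₀ (hWpos i)] at this
      nlinarith [hWpos i]
    · have : a ≤ H 0 j / H 1 j :=
        le_trans h2 (Finset.inf'_le _ (Finset.mem_univ j))
      rw [le_div_iff₀ (hHpos j)] at this
      linarith
end

section
/- Let N, M be positive integers, let W be an N×2 nonnegative real matrix with W_{i2} > 0 for every i ∈ {1,…,N}, and let H be a 2×M row-stochastic real matrix with H_{1j} > 0 for every j ∈ {1,…,M}. Define b_L = min_{i ∈ {1,…,N}} W_{i1}/W_{i2} and b_H = min_{j ∈ {1,…,M}} H_{2j}/H_{1j}. Then for a real number b, the four inequalities (i) W_{i1} + W_{i2}·b ≥ 0, (ii) W_{i2}(1−b) ≥ 0, (iii) H_{1j}(1−b) ≥ 0, and (iv) −H_{1j}·b + H_{2j} ≥ 0 hold for all i ∈ {1,…,N} and all j ∈ {1,…,M} if and only if −b_L ≤ b ≤ b_H. -/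
open Matrix Finset

/-- Two-factor natural bounds along the `b`-axis: with `a = 0`, the
non-negativity constraints of the stochastic matrix factorization hold for all `i, j`
iff `-b_L ≤ b ≤ b_H`, where `b_L = min_i W i 0 / W i 1` and `b_H = min_j H 1 j / H 0 j`. -/
theorem stmt_6 (N M : ℕ) [NeZero N] [NeZero M]
    (W : Matrix (Fin N) (Fin 2) ℝ) (hW : ∀ i r, 0 ≤ W i r)
    (hWpos : ∀ i, 0 < W i 1)
    (H : Matrix (Fin 2) (Fin M) ℝ) (hHnn : ∀ r j, 0 ≤ H r j)
    (hHrow : ∀ r : Fin 2, ∑ j : Fin M, H r j = 1)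
    (hHpos : ∀ j, 0 < H 0 j)
    (b : ℝ) :
    (∀ (i : Fin N) (j : Fin M),
        0 ≤ W i 0 + W i 1 * b ∧
        0 ≤ W i 1 * (1 - b) ∧
        0 ≤ H 0 j * (1 - b) ∧
        0 ≤ -(H 0 j) * b + H 1 j) ↔
      (-(Finset.univ.inf' Finset.univ_nonempty fun i : Fin N => W i 0 / W i 1) ≤ b ∧
        b ≤ Finset.univ.inf' Finset.univ_nonempty fun j : Fin M => H 1 j / H 0 j) := by
  have hM : 0 < M := Nat.pos_of_ne_zero (NeZero.ne M)
  have hN : 0 < N := Nat.pos_of_ne_zero (NeZero.ne N)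
  set j0 : Fin M := ⟨0, hM⟩
  set i0 : Fin N := ⟨0, hN⟩
  have hb1 : (Finset.univ.inf' Finset.univ_nonempty fun j : Fin M => H 1 j / H 0 j) ≤ 1 := by
    by_contra hlt
    push_neg at hlt
    have hlt' : (1:ℝ) < ∑ j : Fin M, H 1 j := by
      calc (1:ℝ) = ∑ j : Fin M, H 0 j := (hHrow 0).symm
        _ < ∑ j : Fin M, H 1 j := by
            apply Finset.sum_lt_sum_of_nonempty Finset.univ_nonempty
            intro j _
            have h1 : (1:ℝ) < H 1 j / H 0 j :=
              lt_of_lt_of_le hlt (Finset.inf'_le _ (Finset.mem_univ j))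
            have := (one_lt_div (hHpos j)).mp h1
            linarith
    rw [hHrow 1] at hlt'
    exact lt_irrefl _ hlt'
  constructor
  · intro h
    refine ⟨?_, ?_⟩
    · obtain ⟨i, -, hi⟩ := Finset.exists_mem_eq_inf' (Finset.univ_nonempty)
        (fun i : Fin N => W i 0 / W i 1)
      rw [hi]
      have h1 := (h i j0).1
      rw [neg_le, le_div_iff₀ (hWpos i)]
      linarith
    · apply Finset.le_inf'
      intro j _
      have h4 := (h i0 j).2.2.2
      rw [le_div_iff₀ (hHpos j)]
      linarith
  · rintro ⟨hl, hr⟩ i j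
    have hb1' : b ≤ 1 := hr.trans hb1
    have hbi : -(W i 0 / W i 1) ≤ b :=
      le_trans (neg_le_neg (Finset.inf'_le _ (Finset.mem_univ i))) hl
    have hbj : b ≤ H 1 j / H 0 j :=
      hr.trans (Finset.inf'_le _ (Finset.mem_univ j))
    rw [neg_le, le_div_iff₀ (hWpos i)] at hbi
    rw [le_div_iff₀ (hHpos j)] at hbj
    refine ⟨by linarith, mul_nonneg (hW i 1) ?_, mul_nonneg (hHnn 0 j) ?_, by linarith⟩
    · linarith
    · linarith
end

section
/- Let W be an N×2 nonnegative real matrix and H a 2×M nonnegative real matrix. Suppose there exist indices j₁ with H_{1 j₁} = 0 and H_{2 j₁} > 0, j₂ with H_{2 j₂} = 0 and H_{1 j₂} > 0, i₁ with W_{i₁ 1} = 0 and W_{i₁ 2} > 0, and i₂ with W_{i₂ 2} = 0 and W_{i₂ 1} > 0. Let a, b be real numbers with 1 − a − b > 0 and suppose that for all i ∈ {1,…,N} and j ∈ {1,…,M}: W_{i1}(1−a) + W_{i2}·b ≥ 0, W_{i1}·a + W_{i2}(1−b) ≥ 0, H_{1j}(1−b) − H_{2j}·a ≥ 0, and −H_{1j}·b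 + H_{2j}(1−a) ≥ 0. Then a = 0 and b = 0. -/
open Matrix

/-- In the two-factor case with anchor words and anchor documents, the
non-negativity constraints on `W * A` and `A⁻¹ * H` (with `A = [[1-a, a],[b, 1-b]]` and
`1 - a - b > 0`) force `a = 0` and `b = 0`. -/
theorem stmt_7 (N M : ℕ)
    (W : Matrix (Fin N) (Fin 2) ℝ) (hW : ∀ i r, 0 ≤ W i r)
    (H : Matrix (Fin 2) (Fin M) ℝ) (hH : ∀ r j, 0 ≤ H r j)
    (j₁ : Fin M) (hj₁ : H 0 j₁ = 0) (hj₁' : 0 < H 1 j₁)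
    (j₂ : Fin M) (hj₂ : H 1 j₂ = 0) (hj₂' : 0 < H 0 j₂)
    (i₁ : Fin N) (hi₁ : W i₁ 0 = 0) (hi₁' : 0 < W i₁ 1)
    (i₂ : Fin N) (hi₂ : W i₂ 1 = 0) (hi₂' : 0 < W i₂ 0)
    (a b : ℝ) (hab : 0 < 1 - a - b)
    (h1 : ∀ i : Fin N, 0 ≤ W i 0 * (1 - a) + W i 1 * b)
    (h2 : ∀ i : Fin N, 0 ≤ W i 0 * a + W i 1 * (1 - b))
    (h3 : ∀ j : Fin M, 0 ≤ H 0 j * (1 - b) - H 1 j * a)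
    (h4 : ∀ j : Fin M, 0 ≤ -(H 0 j) * b + H 1 j * (1 - a)) :
    a = 0 ∧ b = 0 := by
  have ha1 := h3 j₁; rw [hj₁] at ha1
  have ha2 := h2 i₂; rw [hi₂] at ha2
  have hb1 := h1 i₁; rw [hi₁] at hb1
  have hb2 := h4 j₂; rw [hj₂] at hb2
  constructor <;> nlinarith [hj₁', hj₂', hi₁', hi₂']
end
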